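/- Let J be a jellyfish graph with head H and legs isomorphic to the rooted tree L. A set S ⊆ V(J) is a fixing set of J if and only if (i) for every head vertex v, S ∩ V(L_v) is a fixing set of the rooted tree L_v, and (ii) the projection S_proj = { v ∈ V(H) : S ∩ V(L_v) ≠ ∅ } is a fixing set of H. -/

import Mathlib

open SimpleGraph

/-- `φ` is a distinguishing labeling of `G`: the only automorphism preserving `φ` is the identity. -/
def IsDist {V α : Type*} (G : SimpleGraph V) (φ : V → α) : Prop :=
  ∀ π : G ≃g G, (∀ v, φ (π v) = φ v) → ∀ v, π v = v

/-- The distinguishing number `D(G)`. -/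
noncomputable def distNum {V : Type*} (G : SimpleGraph V) : ℕ :=
  sInf {c : ℕ | ∃ φ : V → Fin c, IsDist G φ}

/-- `S` is a fixing set of `G`. -/
def IsFixingSet {V : Type*} (G : SimpleGraph V) (S : Set V) : Prop :=
  ∀ π : G ≃g G, (∀ v ∈ S, π v = v) → ∀ v, π v = v

/-- The fixing number `Fix(G)`. -/
noncomputable def fixNum {V : Type*} (G : SimpleGraph V) : ℕ :=
  sInf {n : ℕ | ∃ S : Set V, S.ncard = n ∧ IsFixingSet G S}

/-- `D(G, c)`: the number of pairwise inequivalent distinguishing labelings of `G`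
using at most `c` colors. -/
noncomputable def countDist {V : Type*} (G : SimpleGraph V) (c : ℕ) : ℕ :=
  Nat.card (Quot (fun φ ψ : {φ : V → Fin c // IsDist G φ} =>
    ∃ π : G ≃g G, ∀ v, φ.1 v = ψ.1 (π v)))

/-- The disjoint union of `r` copies of `G`. -/
def copies {V : Type*} (r : ℕ) (G : SimpleGraph V) : SimpleGraph (Fin r × V) where
  Adj x y := x.1 = y.1 ∧ G.Adj x.2 y.2
  symm := by
    refine ⟨?_⟩
    rintro ⟨i, u⟩ ⟨j, v⟩ ⟨h1, h2⟩
    exact ⟨h1.symm, h2.symm⟩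
  loopless := by
    refine ⟨?_⟩
    rintro ⟨i, u⟩ ⟨-, h⟩
    exact G.loopless.irrefl u h

/-- A distinguishing labeling of the graph `G` rooted at `r`:
the only root-preserving automorphism preserving `φ` is the identity. -/
def IsRDist {V α : Type*} (G : SimpleGraph V) (r : V) (φ : V → α) : Prop :=
  ∀ π : G ≃g G, π r = r → (∀ v, φ (π v) = φ v) → ∀ v, π v = v

/-- The distinguishing number of the graph `G` rooted at `r`. -/
noncomputable def rdistNum {V : Type*} (G : SimpleGraph V) (r : V) : ℕ :=
  sInf {c : ℕ | ∃ φ : V → Fin c, IsRDist G r φ}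

/-- The number of pairwise inequivalent (under root-preserving automorphisms)
distinguishing labelings of the rooted graph `(G, r)` using at most `c` colors. -/
noncomputable def rcountDist {V : Type*} (G : SimpleGraph V) (r : V) (c : ℕ) : ℕ :=
  Nat.card (Quot (fun φ ψ : {φ : V → Fin c // IsRDist G r φ} =>
    ∃ π : G ≃g G, π r = r ∧ ∀ v, φ.1 v = ψ.1 (π v)))

/-- `S` is a fixing set of the graph `G` rooted at `r` (w.r.t. root-preserving automorphisms). -/
def IsRFix {V : Type*} (G : SimpleGraph V) (r : V) (S : Set V) : Prop :=
  ∀ π : G ≃g G, π r = r → (∀ v ∈ S, π v = v) → ∀ v, π v = v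

/-- The fixing number of the graph `G` rooted at `r`. -/
noncomputable def rfixNum {V : Type*} (G : SimpleGraph V) (r : V) : ℕ :=
  sInf {n : ℕ | ∃ S : Set V, S.ncard = n ∧ IsRFix G r S}

/-- A rooted isomorphism between `(G, r)` and `(H, s)`. -/
def RootedIso {V W : Type*} (G : SimpleGraph V) (r : V) (H : SimpleGraph W) (s : W) : Prop :=
  ∃ e : G ≃g H, e r = s

/-- The jellyfish graph with head `H` and a copy of the rooted tree `(L, ρ)` attached
(by its root) at each vertex of `H`.  The leg at `a` is `{a} × B`, attached at `(a, ρ)`. -/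
def jellyfish {A B : Type*} (H : SimpleGraph A) (L : SimpleGraph B) (ρ : B) :
    SimpleGraph (A × B) where
  Adj x y := (x.2 = ρ ∧ y.2 = ρ ∧ H.Adj x.1 y.1) ∨ (x.1 = y.1 ∧ L.Adj x.2 y.2)
  symm := by
    refine ⟨?_⟩
    rintro ⟨a, b⟩ ⟨a', b'⟩ (⟨h1, h2, h3⟩ | ⟨h1, h2⟩)
    · exact Or.inl ⟨h2, h1, h3.symm⟩
    · exact Or.inr ⟨h1.symm, h2.symm⟩
  loopless := by
    refine ⟨?_⟩
    rintro ⟨a, b⟩ (⟨-, -, h⟩ | ⟨-, h⟩)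
    · exact H.loopless.irrefl a h
    · exact L.loopless.irrefl b h

namespace JellyAux

open SimpleGraph Walk

variable {A B : Type*} {H : SimpleGraph A} {L : SimpleGraph B} {ρ : B}

/-- The embedding of the leg at `a` into the jellyfish graph. -/
def legHom (H : SimpleGraph A) (L : SimpleGraph B) (ρ : B) (a : A) : L →g jellyfish H L ρ where
  toFun b := (a, b)
  map_rel' h := Or.inr ⟨rfl, h⟩

/-- The embedding of the head into the jellyfish graph. -/
def headHom (H : SimpleGraph A) (L : SimpleGraph B) (ρ : B) : H →g jellyfish H L ρ where
  toFun a := (a, ρ)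
  map_rel' h := Or.inl ⟨rfl, rfl, h⟩

lemma confined {a : A} {x y : A × B} (p : (jellyfish H L ρ).Walk x y) :
    x.1 = a → (a, ρ) ∉ p.support → ∀ z ∈ p.support, z.1 = a := by
  induction p with
  | nil =>
    intro hx _ z hz
    simp only [Walk.support_nil, List.mem_singleton] at hz
    subst hz; exact hx
  | @cons u v w h q ih =>
    intro hx hρ z hz
    rw [Walk.support_cons] at hρ hz
    have hu2 : u.2 ≠ ρ := by
      intro h2
      exact hρ (List.mem_cons.mpr (Or.inl (Prod.ext hx.symm h2.symm)))
    have hv1 : v.1 = a := by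
      rcases h with ⟨h1, -, -⟩ | ⟨h1, -⟩
      · exact absurd h1 hu2
      · rw [← h1, hx]
    rcases List.mem_cons.mp hz with rfl | hz'
    · exact hx
    · exact ih hv1 (fun hm => hρ (List.mem_cons_of_mem _ hm)) z hz'

lemma lift {a : A} {x y : A × B} (p : (jellyfish H L ρ).Walk x y) :
    (∀ z ∈ p.support, z.1 = a) → ∀ {b d : B} (hx : x = (a, b)) (hy : y = (a, d)),
      ∃ q : L.Walk b d, p.copy hx hy = q.map (legHom H L ρ a) := by
  induction p with
  | nil =>
    intro _ b d hx hy
    subst hx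
    have h2 : b = d := congrArg Prod.snd hy
    subst h2
    exact ⟨Walk.nil, rfl⟩
  | @cons u v w h q ih =>
    intro hall b d hx hy
    subst hx; subst hy
    obtain ⟨v1, v2⟩ := v
    have hv1 : v1 = a := hall (v1, v2) (List.mem_cons_of_mem _ q.start_mem_support)
    subst v1
    have h' := h
    rcases h' with ⟨-, -, hH'⟩ | ⟨-, hadj⟩
    · exact absurd hH' (H.loopless.irrefl a)
    · obtain ⟨q', hq'⟩ := ih (fun z hz => hall z (List.mem_cons_of_mem _ hz)) rfl rfl
      rw [Walk.copy_rfl_rfl] at hq'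
      refine ⟨Walk.cons hadj q', ?_⟩
      rw [Walk.copy_rfl_rfl, Walk.map_cons, hq']
      rfl

lemma from_rho {a : A} {b : B} (hb : b ≠ ρ) (w : (jellyfish H L ρ).Walk (a, ρ) (a, b))
    (hw : (a, ρ) ∉ w.support.tail) : ∀ z ∈ w.support, z.1 = a := by
  obtain ⟨u, h, w', rfl⟩ := Walk.exists_eq_cons_of_ne
    (fun hc => hb (congrArg Prod.snd hc).symm) w
  rw [Walk.support_cons, List.tail_cons] at hw
  have hc := confined w'.reverse (rfl : ((a, b) : A × B).1 = a)
    (by rwa [Walk.support_reverse, List.mem_reverse])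
  intro z hz
  rw [Walk.support_cons] at hz
  rcases List.mem_cons.mp hz with rfl | hz'
  · rfl
  · exact hc z (by rw [Walk.support_reverse, List.mem_reverse]; exact hz')

lemma cycle_snd (hLac : L.IsAcyclic) {v : A × B} {c : (jellyfish H L ρ).Walk v v}
    (hc : c.IsCycle) : ∀ z ∈ c.support, z.2 = ρ := by
  classical
  rintro ⟨a, b⟩ hzc
  by_contra hzρ
  have hbρ : b ≠ ρ := hzρ
  set d := c.rotate _ hzc with hd
  have hdc : d.IsCycle := hc.rotate hzc
  have hconf : ∀ z ∈ d.support, z.1 = a := by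
    by_cases h1 : (a, ρ) ∈ d.support
    · have hspec := Walk.take_spec d h1
      set t := d.takeUntil _ h1 with ht
      set r := d.dropUntil _ h1 with hr
      have hnd : d.support.tail.Nodup := hdc.2
      have hts : d.support.tail = t.support.tail ++ r.support.tail := by
        conv_lhs => rw [← hspec]
        rw [Walk.support_append, Walk.support_eq_cons t, List.cons_append, List.tail_cons]
        rfl
      rw [hts] at hnd
      have hdisj := List.disjoint_of_nodup_append hnd
      have hmt : (a, ρ) ∈ t.support.tail := by
        have hend : (a, ρ) ∈ t.support := t.end_mem_support
        rw [Walk.support_eq_cons t] at hend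
        rcases List.mem_cons.mp hend with heq | h
        · exact absurd (congrArg Prod.snd heq) (Ne.symm hbρ)
        · exact h
      have hmr_end : (a, b) ∈ r.support.tail := by
        have hend : (a, b) ∈ r.support := r.end_mem_support
        rw [Walk.support_eq_cons r] at hend
        rcases List.mem_cons.mp hend with heq | h
        · exact absurd (congrArg Prod.snd heq) hbρ
        · exact h
      have htt : ∀ z ∈ t.support, z.1 = a := by
        have hnodup_t : t.support.Nodup := by
          rw [Walk.support_eq_cons t]
          exact List.nodup_cons.mpr ⟨fun hmem => hdisj hmem hmr_end, hnd.of_append_left⟩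
        have h1' : (a, ρ) ∉ t.reverse.support.tail := by
          have hrev : t.reverse.support.Nodup := by
            rw [Walk.support_reverse]; exact List.nodup_reverse.mpr hnodup_t
          rw [Walk.support_eq_cons t.reverse] at hrev
          exact (List.nodup_cons.mp hrev).1
        have hfr := from_rho hbρ t.reverse h1'
        intro z hz
        exact hfr z (by rw [Walk.support_reverse, List.mem_reverse]; exact hz)
      have hrt : (a, ρ) ∉ r.support.tail := fun hmr => hdisj hmt hmr
      have hrr := from_rho hbρ r hrt
      intro z hz
      rw [← hspec, Walk.support_append] at hz
      rcases List.mem_append.mp hz with hz' | hz'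
      · exact htt z hz'
      · exact hrr z (List.mem_of_mem_tail hz')
    · exact confined d rfl h1
  obtain ⟨q, hq⟩ := lift d hconf rfl rfl
  rw [Walk.copy_rfl_rfl] at hq
  have hinj : Function.Injective (legHom H L ρ a) := fun b b' h => congrArg Prod.snd h
  have : q.IsCycle := by
    rw [hq] at hdc
    exact (Walk.map_isCycle_iff_of_injective hinj).mp hdc
  exact hLac q this

lemma iso_snd [DecidableEq A] (hH : ∃ (a₀ : A) (p : H.Walk a₀ a₀), p.IsHamiltonianCycle) (hLac : L.IsAcyclic)
    (π : jellyfish H L ρ ≃g jellyfish H L ρ) (a : A) : (π (a, ρ)).2 = ρ := by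
  obtain ⟨a₀, p, hp⟩ := hH
  have hinj : Function.Injective (headHom H L ρ) := fun a a' h => congrArg Prod.fst h
  have hc : (p.map (headHom H L ρ)).IsCycle :=
    (Walk.map_isCycle_iff_of_injective hinj).mpr hp.isCycle
  have hc2 : ((p.map (headHom H L ρ)).map π.toHom).IsCycle :=
    (Walk.map_isCycle_iff_of_injective (fun u v h => π.toEquiv.injective h)).mpr hc
  have hmem : π.toHom (a, ρ) ∈ ((p.map (headHom H L ρ)).map π.toHom).support := by
    rw [Walk.support_map]
    exact List.mem_map_of_mem (by
      rw [Walk.support_map]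
      exact List.mem_map_of_mem (hp.mem_support a))
  exact cycle_snd hLac hc2 _ hmem

/-- The jellyfish automorphism induced by a root-preserving automorphism of the leg at `a₀`. -/
def legAutFun [DecidableEq A] (σ : B → B) (a₀ : A) (x : A × B) : A × B :=
  if x.1 = a₀ then (x.1, σ x.2) else x

lemma legAut_adj [DecidableEq A] (σ : L ≃g L) (hσ : σ ρ = ρ) (a₀ : A) {x y : A × B}
    (h : (jellyfish H L ρ).Adj x y) :
    (jellyfish H L ρ).Adj (legAutFun σ a₀ x) (legAutFun σ a₀ y) := by
  obtain ⟨xa, xb⟩ := x; obtain ⟨ya, yb⟩ := y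
  rcases h with ⟨h1, h2, h3⟩ | ⟨h1, h2⟩
  · have hfix : ∀ z : A, legAutFun (⇑σ) a₀ (z, ρ) = (z, ρ) := by
      intro z; by_cases h : z = a₀ <;> simp [legAutFun, h, hσ]
    rw [show xb = ρ from h1, show yb = ρ from h2, hfix, hfix]
    exact Or.inl ⟨rfl, rfl, h3⟩
  · rw [show ya = xa from h1.symm]
    by_cases hx : xa = a₀
    · simp only [legAutFun, hx, if_true]
      exact Or.inr ⟨rfl, σ.map_rel_iff.mpr h2⟩
    · simp only [legAutFun, hx, if_false]
      exact Or.inr ⟨rfl, h2⟩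

lemma legAutFun_inv [DecidableEq A] (σ : L ≃g L) (a₀ : A) (z : A × B) :
    legAutFun (⇑σ.symm) a₀ (legAutFun (⇑σ) a₀ z) = z := by
  obtain ⟨za, zb⟩ := z
  by_cases h : za = a₀ <;> simp [legAutFun, h]

def legAut (H : SimpleGraph A) [DecidableEq A] {L : SimpleGraph B} {ρ : B} (a₀ : A)
    (σ : L ≃g L) (hσ : σ ρ = ρ) : jellyfish H L ρ ≃g jellyfish H L ρ where
  toFun := legAutFun (⇑σ) a₀
  invFun := legAutFun (⇑σ.symm) a₀
  left_inv := legAutFun_inv σ a₀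
  right_inv := by
    intro z
    exact legAutFun_inv (σ := σ.symm) a₀ z
  map_rel_iff' := by
    intro x y
    constructor
    · intro h
      have hσ' : σ.symm ρ = ρ := σ.toEquiv.symm_apply_eq.mpr hσ.symm
      have h2 := legAut_adj σ.symm hσ' a₀ h
      have h3 : (jellyfish H L ρ).Adj (legAutFun (⇑σ.symm) a₀ (legAutFun (⇑σ) a₀ x))
          (legAutFun (⇑σ.symm) a₀ (legAutFun (⇑σ) a₀ y)) := h2
      rwa [legAutFun_inv σ a₀ x, legAutFun_inv σ a₀ y] at h3
    · exact legAut_adj σ hσ a₀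

/-- The jellyfish automorphism induced by an automorphism of the head. -/
def headAut {H : SimpleGraph A} (L : SimpleGraph B) (ρ : B) (τ : H ≃g H) :
    jellyfish H L ρ ≃g jellyfish H L ρ where
  toFun x := (τ x.1, x.2)
  invFun x := (τ.symm x.1, x.2)
  left_inv := by intro ⟨xa, xb⟩; simp
  right_inv := by intro ⟨xa, xb⟩; simp
  map_rel_iff' := by
    intro x y
    obtain ⟨xa, xb⟩ := x; obtain ⟨ya, yb⟩ := y
    constructor
    · rintro (⟨h1, h2, h3⟩ | ⟨h1, h2⟩)
      · exact Or.inl ⟨h1, h2, τ.map_rel_iff.mp h3⟩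
      · exact Or.inr ⟨τ.toEquiv.injective h1, h2⟩
    · rintro (⟨h1, h2, h3⟩ | ⟨h1, h2⟩)
      · exact Or.inl ⟨h1, h2, τ.map_rel_iff.mpr h3⟩
      · exact Or.inr ⟨congrArg τ h1, h2⟩

end JellyAux

/-- A set `S` of vertices of a jellyfish graph `J` is a fixing set iff (i) its intersection
with each leg is a fixing set of that rooted leg, and (ii) its projection
`{v ∈ V(H) : S ∩ V(L_v) ≠ ∅}` is a fixing set of the head `H`. -/
theorem fixingSet_jellyfish_iff {A B : Type*} [Fintype A] [DecidableEq A] [Fintype B]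
    (H : SimpleGraph A) (L : SimpleGraph B) (ρ : B)
    (hH : ∃ (a : A) (p : H.Walk a a), p.IsHamiltonianCycle) (hL : L.IsTree)
    (S : Set (A × B)) :
    IsFixingSet (jellyfish H L ρ) S ↔
      ((∀ a : A, IsRFix L ρ {b : B | (a, b) ∈ S}) ∧
       IsFixingSet H {a : A | ∃ b : B, (a, b) ∈ S}) := by
  classical
  constructor
  · intro hS
    constructor
    · intro a σ hσρ hσfix b
      have hfixP : ∀ v ∈ S, (JellyAux.legAut H a σ hσρ) v = v := by
        rintro ⟨va, vb⟩ hv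
        show JellyAux.legAutFun (⇑σ) a (va, vb) = (va, vb)
        by_cases h : va = a
        · subst h
          have hfb : σ vb = vb := hσfix vb hv
          simp [JellyAux.legAutFun, hfb]
        · simp [JellyAux.legAutFun, h]
      have h3 : JellyAux.legAutFun (⇑σ) a (a, b) = (a, b) :=
        hS (JellyAux.legAut H a σ hσρ) hfixP (a, b)
      have h4 : ((a : A), σ b) = (a, b) := by
        rwa [show JellyAux.legAutFun (⇑σ) a (a, b) = (a, σ b) from by
          simp [JellyAux.legAutFun]] at h3
      exact congrArg Prod.snd h4
    · intro τ hτfix a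
      have hfixP : ∀ v ∈ S, (JellyAux.headAut L ρ τ) v = v := by
        rintro ⟨va, vb⟩ hv
        show ((τ va : A), vb) = (va, vb)
        rw [hτfix va ⟨vb, hv⟩]
      have h3 : ((τ a : A), ρ) = (a, ρ) := hS (JellyAux.headAut L ρ τ) hfixP (a, ρ)
      exact congrArg Prod.fst h3
  · rintro ⟨hi, hii⟩ π hfix
    have hLac : L.IsAcyclic := hL.IsAcyclic
    have hsnd : ∀ (π' : jellyfish H L ρ ≃g jellyfish H L ρ) (a : A), (π' (a, ρ)).2 = ρ :=
      fun π' a => JellyAux.iso_snd hH hLac π' a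
    have hπρ : ∀ (π' : jellyfish H L ρ ≃g jellyfish H L ρ) (a : A),
        π' (a, ρ) = ((π' (a, ρ)).1, ρ) := fun π' a => Prod.ext rfl (hsnd π' a)
    have hnon : ∀ (π' : jellyfish H L ρ ≃g jellyfish H L ρ) (a : A) (b : B),
        (π' (a, b)).2 = ρ → b = ρ := by
      intro π' a b hc
      have h1 : π' (a, b) = ((π' (a, b)).1, ρ) := Prod.ext rfl hc
      have h2 : (a, b) = π'.symm ((π' (a, b)).1, ρ) := by
        rw [← h1, RelIso.symm_apply_apply]
      have h5 := hsnd π'.symm (π' (a, b)).1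
      rw [← h2] at h5
      exact h5
    have hfst : ∀ (π' : jellyfish H L ρ ≃g jellyfish H L ρ) (a : A) (b : B),
        (π' (a, b)).1 = (π' (a, ρ)).1 := by
      intro π' a b
      have step : ∀ {x y : B} (q : L.Walk x y), (π' (a, x)).1 = (π' (a, ρ)).1 →
          (π' (a, y)).1 = (π' (a, ρ)).1 := by
        intro x y q
        induction q with
        | nil => exact id
        | @cons x w y h q ih =>
          intro hx
          have hadj : (jellyfish H L ρ).Adj (π' (a, x)) (π' (a, w)) :=
            π'.map_rel_iff.mpr (Or.inr ⟨rfl, h⟩)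
          rcases hadj with ⟨h1, h2, -⟩ | ⟨h1, -⟩
          · have hxρ := hnon π' a x h1
            have hwρ := hnon π' a w h2
            rw [hxρ, hwρ] at h
            exact absurd h (L.loopless.irrefl ρ)
          · exact ih (by rw [← h1]; exact hx)
      obtain ⟨q⟩ := hL.isConnected.preconnected ρ b
      exact step q rfl
    let τ : H ≃g H := {
      toFun := fun a => (π (a, ρ)).1
      invFun := fun a => (π.symm (a, ρ)).1
      left_inv := by
        intro a
        have h1 : π.symm (π (a, ρ)) = (a, ρ) := π.symm_apply_apply _
        rw [hπρ π a] at h1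
        exact congrArg Prod.fst h1
      right_inv := by
        intro a
        have h1 : π (π.symm (a, ρ)) = (a, ρ) := π.apply_symm_apply _
        rw [hπρ π.symm a] at h1
        exact congrArg Prod.fst h1
      map_rel_iff' := by
        intro a a'
        constructor
        · intro h
          have hadj : (jellyfish H L ρ).Adj ((π (a, ρ)).1, ρ) ((π (a', ρ)).1, ρ) :=
            Or.inl ⟨rfl, rfl, h⟩
          rw [← hπρ π a, ← hπρ π a'] at hadj
          rcases π.map_rel_iff.mp hadj with ⟨-, -, h3⟩ | ⟨-, h3⟩
          · exact h3
          · exact absurd h3 (L.loopless.irrefl ρ)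
        · intro h
          have hadj : (jellyfish H L ρ).Adj (π (a, ρ)) (π (a', ρ)) :=
            π.map_rel_iff.mpr (Or.inl ⟨rfl, rfl, h⟩)
          rw [hπρ π a, hπρ π a'] at hadj
          rcases hadj with ⟨-, -, h3⟩ | ⟨-, h3⟩
          · exact h3
          · exact absurd h3 (L.loopless.irrefl ρ) }
    have hτ : ∀ a ∈ {a : A | ∃ b : B, (a, b) ∈ S}, τ a = a := by
      intro a ha
      obtain ⟨b, hab⟩ := ha
      show (π (a, ρ)).1 = a
      rw [← hfst π a b, hfix (a, b) hab]
    have hfA : ∀ a : A, (π (a, ρ)).1 = a := hii τ hτ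
    have hπfst : ∀ (a : A) (b : B), (π (a, b)).1 = a := by
      intro a b; rw [hfst π a b, hfA a]
    have hπab : ∀ (a : A) (b : B), π (a, b) = (a, (π (a, b)).2) :=
      fun a b => Prod.ext (hπfst a b) rfl
    have hsymm_fst : ∀ (a : A) (b : B), (π.symm (a, b)).1 = a := by
      intro a b
      have h1 := hπfst (π.symm (a, b)).1 (π.symm (a, b)).2
      rw [Prod.mk.eta, RelIso.apply_symm_apply] at h1
      exact h1.symm
    have hsymm_ab : ∀ (a : A) (b : B), π.symm (a, b) = (a, (π.symm (a, b)).2) :=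
      fun a b => Prod.ext (hsymm_fst a b) rfl
    rintro ⟨a, b⟩
    let σa : L ≃g L := {
      toFun := fun b => (π (a, b)).2
      invFun := fun b => (π.symm (a, b)).2
      left_inv := by
        intro b
        show (π.symm (a, (π (a, b)).2)).2 = b
        conv_lhs => rw [← hπab a b]
        rw [RelIso.symm_apply_apply]
      right_inv := by
        intro b
        show (π (a, (π.symm (a, b)).2)).2 = b
        conv_lhs => rw [← hsymm_ab a b]
        rw [RelIso.apply_symm_apply]
      map_rel_iff' := by
        intro b b'
        constructor
        · intro h
          have hadj : (jellyfish H L ρ).Adj (a, (π (a, b)).2) (a, (π (a, b')).2) :=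
            Or.inr ⟨rfl, h⟩
          rw [← hπab a b, ← hπab a b'] at hadj
          rcases π.map_rel_iff.mp hadj with ⟨-, -, h3⟩ | ⟨-, h3⟩
          · exact absurd h3 (H.loopless.irrefl a)
          · exact h3
        · intro h
          have hadj : (jellyfish H L ρ).Adj (π (a, b)) (π (a, b')) :=
            π.map_rel_iff.mpr (Or.inr ⟨rfl, h⟩)
          rw [hπab a b, hπab a b'] at hadj
          rcases hadj with ⟨-, -, h3⟩ | ⟨-, h3⟩
          · exact absurd h3 (H.loopless.irrefl a)
          · exact h3 }
    have hσρ : σa ρ = ρ := hsnd π a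
    have hσfix : ∀ b' ∈ {b : B | (a, b) ∈ S}, σa b' = b' := by
      intro b' hb'
      show (π (a, b')).2 = b'
      rw [hfix (a, b') hb']
    have hg : (π (a, b)).2 = b := hi a σa hσρ hσfix b
    rw [hπab a b, hg]
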